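/- Let X : [0,L] → ℝ^d be a piecewise continuously differentiable path (with arbitrary starting point) and let p : ℝ^d → ℝ^m be any polynomial map. Define the polynomial map p̃ : ℝ^d → ℝ^m by p̃(y) = p(y + X(0)) − p(X(0)), so that p̃(0) = 0. Then for every w ∈ T(ℝ^m), ⟨σ(p(X)), w⟩ = ⟨σ(X), M_{p̃}(w)⟩, where p(X) denotes the path t ↦ p(X(t)). -/

import Mathlib

noncomputable section

open MeasureTheory

/-- Words in the alphabet `{1,…,d}`. -/
abbrev Word (d : ℕ) := List (Fin d)

/-- `T(ℝ^d)`: the real vector space with basis the words in `{1,…,d}`. -/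
abbrev Tens (d : ℕ) := Word d →₀ ℝ

namespace SigPaper

variable {d m s : ℕ}

/-- The basis word `w` as an element of `T(ℝ^d)`. -/
def wordT (w : Word d) : Tens d := Finsupp.single w 1

/-- The shuffle product of two words. -/
def shuffleWord : Word d → Word d → Tens d
  | [], v => Finsupp.single v 1
  | u, [] => Finsupp.single u 1
  | a :: u, b :: v =>
      Finsupp.mapDomain (fun w => a :: w) (shuffleWord u (b :: v)) +
      Finsupp.mapDomain (fun w => b :: w) (shuffleWord (a :: u) v)
  termination_by u v => u.length + v.length
  decreasing_by all_goals simp +arith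

/-- The shuffle product `⧢` on `T(ℝ^d)`, the bilinear extension of the shuffle of words. -/
def shuffle (x y : Tens d) : Tens d :=
  x.sum fun u a => y.sum fun v b => (a * b) • shuffleWord u v

/-- The operator appending the letter `i` at the end of every word (`T_i^+`). -/
def appendLetter (i : Fin d) (x : Tens d) : Tens d :=
  Finsupp.mapDomain (fun w => w ++ [i]) x

/-- The right half-shuffle of two words: `w ≻ (v∘i) = (w ⧢ v)∘i` (zero if the right word
is empty). -/
def halfShuffleWord (u v : Word d) : Tens d :=
  match v.getLast? with
  | none => 0
  | some i => appendLetter i (shuffleWord u v.dropLast)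

/-- The right half-shuffle `≻`, extended bilinearly. -/
def halfShuffle (x y : Tens d) : Tens d :=
  x.sum fun u a => y.sum fun v b => (a * b) • halfShuffleWord u v

/-- The letter-appending operator `T_i^+`. -/
def Tplus (i : Fin d) : Tens d → Tens d := appendLetter i

/-- `T_i^-` on a word: removes the last letter if it equals `i`, otherwise `0`. -/
def TminusWord (i : Fin d) (w : Word d) : Tens d :=
  match w.getLast? with
  | none => 0
  | some j => if j = i then Finsupp.single w.dropLast 1 else 0

/-- The letter-removing operator `T_i^-`. -/
def Tminus (i : Fin d) (x : Tens d) : Tens d := x.sum fun w a => a • TminusWord i w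

/-- The single-letter word `i` in `T(ℝ^d)`. -/
def letterT (i : Fin d) : Tens d := Finsupp.single [i] 1

/-- Shuffle powers `x^{⧢ n}`. -/
def shufflePow (x : Tens d) : ℕ → Tens d
  | 0 => Finsupp.single [] 1
  | n + 1 => shuffle (shufflePow x n) x

/-- Shuffle product of a list of elements. -/
def shuffleList : List (Tens d) → Tens d
  | [] => Finsupp.single [] 1
  | x :: xs => shuffle x (shuffleList xs)

/-- Image of the monomial `x^t` under `φ_d`: the shuffle product of its letters. -/
def phiMon (t : Fin d →₀ ℕ) : Tens d :=
  shuffleList ((List.finRange d).map fun i => shufflePow (letterT i) (t i))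

/-- The embedding `φ_d : ℝ[x₁,…,x_d] → (T(ℝ^d), ⧢)` sending the monomial
`x_{i₁}⋯x_{i_l}` to `i₁ ⧢ ⋯ ⧢ i_l`. -/
def phi (f : MvPolynomial (Fin d) ℝ) : Tens d :=
  f.support.sum fun t => f.coeff t • phiMon t

/-- A polynomial map `p : ℝ^d → ℝ^m`, given by `m` polynomials in `d` variables. -/
abbrev PolyMap (d m : ℕ) := Fin m → MvPolynomial (Fin d) ℝ

/-- `k_p^{ij} = φ_d(∂p_i/∂x_j) ∈ T(ℝ^d)`. -/
def kP (p : PolyMap d m) (i : Fin m) (j : Fin d) : Tens d :=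
  phi (MvPolynomial.pderiv j (p i))

/-- Auxiliary: `M_p` on reversed words, so that `M_p(e) = e` and
`M_p(w∘i) = Σ_j (M_p(w) ⧢ k_p^{ij})∘j`. -/
def MpRev (p : PolyMap d m) : List (Fin m) → Tens d
  | [] => Finsupp.single [] 1
  | i :: w => ∑ j : Fin d, appendLetter j (shuffle (MpRev p w) (kP p i j))

/-- `M_p` on a word. -/
def MpWord (p : PolyMap d m) (w : Word m) : Tens d := MpRev p w.reverse

/-- The linear map `M_p : T(ℝ^m) → T(ℝ^d)`. -/
def Mp (p : PolyMap d m) (x : Tens m) : Tens d := x.sum fun w a => a • MpWord p w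

/-- `X : [0,L] → ℝ^d` is piecewise continuously differentiable: there is a partition
`0 = t₀ ≤ t₁ ≤ ⋯ ≤ t_n = L` such that `X` is `C¹` on each subinterval. -/
def PiecewiseC1 (X : ℝ → Fin d → ℝ) (L : ℝ) : Prop :=
  ∃ (n : ℕ) (t : Fin (n + 1) → ℝ), Monotone t ∧ t 0 = 0 ∧ t (Fin.last n) = L ∧
    ∀ k : Fin n, ContDiffOn ℝ 1 X (Set.Icc (t k.castSucc) (t k.succ))

/-- Iterated-integral signature coefficients, on reversed words:
`⟨σ(X|_{[0,t]}), w∘i⟩ = ∫_0^t ⟨σ(X|_{[0,r]}), w⟩ Ẋ^i_r dr`. -/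
def sigRev (X : ℝ → Fin d → ℝ) : List (Fin d) → ℝ → ℝ
  | [], _ => 1
  | i :: w, t => ∫ r in (0:ℝ)..t, sigRev X w r * deriv (fun u => X u i) r

/-- `⟨σ(X|_{[0,L]}), w⟩`, the signature coefficient of the word `w`. -/
def sigWord (X : ℝ → Fin d → ℝ) (L : ℝ) (w : Word d) : ℝ := sigRev X w.reverse L

/-- The pairing `⟨σ(X|_{[0,L]}), x⟩` for `x ∈ T(ℝ^d)`. -/
def sigT (X : ℝ → Fin d → ℝ) (L : ℝ) (x : Tens d) : ℝ :=
  x.sum fun w a => a * sigWord X L w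

/-- The transformed path `p(X) : t ↦ p(X(t))`. -/
def pPath (p : PolyMap d m) (X : ℝ → Fin d → ℝ) : ℝ → Fin m → ℝ :=
  fun t i => MvPolynomial.eval (X t) (p i)

/-- The translated polynomial map `p̃(y) = p(y + x₀) − p(x₀)`, satisfying `p̃(0) = 0`. -/
def ptilde (p : PolyMap d m) (x0 : Fin d → ℝ) : PolyMap d m := fun i =>
  MvPolynomial.aeval (fun j => MvPolynomial.X j + MvPolynomial.C (x0 j)) (p i) -
    MvPolynomial.C (MvPolynomial.eval x0 (p i))

/-- The pairing `⟨exp_∘(L·𝟙), x⟩` for `x ∈ T(ℝ¹)`: the coefficient of the word of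
length `n` in `exp_∘(L·𝟙)` is `Lⁿ/n!`. -/
def expPair (L : ℝ) (x : Tens 1) : ℝ :=
  x.sum fun w a => a * (L ^ w.length / (w.length.factorial : ℝ))

/-- The pairing `⟨σ(X) ∘ σ(Y), x⟩` of the concatenation product of two signatures with
`x ∈ T(ℝ^d)`: on a word `w` it is `Σ_{u∘v = w} ⟨σ(X), u⟩·⟨σ(Y), v⟩`. -/
def concatPair (X Y : ℝ → Fin d → ℝ) (L : ℝ) (x : Tens d) : ℝ :=
  x.sum fun w a =>
    a * ∑ k ∈ Finset.range (w.length + 1), sigWord X L (w.take k) * sigWord Y L (w.drop k)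


section AuxAlg

open Finsupp

variable {d' : ℕ}

/-- `sigT` as a linear combination. -/
lemma sigT_eq_lc (X : ℝ → Fin d' → ℝ) (L : ℝ) (x : Tens d') :
    sigT X L x = Finsupp.linearCombination ℝ (sigWord X L) x := by
  simp [sigT, Finsupp.linearCombination_apply, Finsupp.sum, smul_eq_mul]

lemma sigT_single (X : ℝ → Fin d' → ℝ) (L : ℝ) (w : Word d') (c : ℝ) :
    sigT X L (Finsupp.single w c) = c * sigWord X L w := by
  rw [sigT_eq_lc, Finsupp.linearCombination_single, smul_eq_mul]

lemma sigT_wordT (X : ℝ → Fin d' → ℝ) (L : ℝ) (w : Word d') :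
    sigT X L (wordT w) = sigWord X L w := by
  rw [wordT, sigT_single, one_mul]

lemma sigT_zero (X : ℝ → Fin d' → ℝ) (L : ℝ) : sigT X L 0 = 0 := by
  rw [sigT_eq_lc]; simp

lemma sigT_add (X : ℝ → Fin d' → ℝ) (L : ℝ) (x y : Tens d') :
    sigT X L (x + y) = sigT X L x + sigT X L y := by
  simp [sigT_eq_lc]

lemma sigT_smul (X : ℝ → Fin d' → ℝ) (L : ℝ) (c : ℝ) (x : Tens d') :
    sigT X L (c • x) = c * sigT X L x := by
  simp [sigT_eq_lc]

lemma sigT_finset_sum {α : Type*} (X : ℝ → Fin d' → ℝ) (L : ℝ) (s : Finset α)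
    (f : α → Tens d') : sigT X L (∑ a ∈ s, f a) = ∑ a ∈ s, sigT X L (f a) := by
  simp [sigT_eq_lc]

/-- `Tminus` as a linear combination. -/
lemma Tminus_eq_lc (i : Fin d') (x : Tens d') :
    Tminus i x = Finsupp.linearCombination ℝ (TminusWord i) x := by
  simp [Tminus, Finsupp.linearCombination_apply, Finsupp.sum]

lemma Tminus_single (i : Fin d') (w : Word d') (c : ℝ) :
    Tminus i (Finsupp.single w c) = c • TminusWord i w := by
  rw [Tminus_eq_lc, Finsupp.linearCombination_single]

lemma Tminus_finset_sum {α : Type*} (i : Fin d') (s : Finset α) (f : α → Tens d') :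
    Tminus i (∑ a ∈ s, f a) = ∑ a ∈ s, Tminus i (f a) := by
  simp [Tminus_eq_lc]

lemma TminusWord_nil (i : Fin d') : TminusWord i ([] : Word d') = 0 := rfl

lemma TminusWord_concat (i : Fin d') (u : Word d') (a : Fin d') :
    TminusWord i (u ++ [a]) = if a = i then Finsupp.single u 1 else 0 := by
  simp [TminusWord, List.getLast?_concat, List.dropLast_concat]

/-- `shuffle` written via linear combinations. -/
lemma shuffle_eq_lc (x y : Tens d') :
    shuffle x y = Finsupp.linearCombination ℝ
      (fun u => Finsupp.linearCombination ℝ (fun v => shuffleWord u v) y) x := by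
  simp only [shuffle, Finsupp.linearCombination_apply]
  refine Finsupp.sum_congr (fun u _ => ?_)
  rw [Finsupp.smul_sum]
  refine Finsupp.sum_congr (fun v _ => ?_)
  rw [mul_smul]

lemma shuffle_single_single (u v : Word d') (a b : ℝ) :
    shuffle (Finsupp.single u a) (Finsupp.single v b) = (a * b) • shuffleWord u v := by
  rw [shuffle_eq_lc, Finsupp.linearCombination_single, Finsupp.linearCombination_single,
    smul_smul]

lemma shuffle_wordT (u v : Word d') :
    shuffle (wordT u) (wordT v) = shuffleWord u v := by
  rw [wordT, wordT, shuffle_single_single]; simp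

lemma shuffle_zero_left (y : Tens d') : shuffle 0 y = 0 := by
  rw [shuffle_eq_lc]; simp

lemma shuffleWord_nil_left (v : Word d') : shuffleWord ([] : Word d') v = Finsupp.single v 1 := by
  rw [shuffleWord]

lemma shuffleWord_nil_right (u : Word d') : shuffleWord u ([] : Word d') = Finsupp.single u 1 := by
  cases u with
  | nil => rw [shuffleWord]
  | cons a u => rw [shuffleWord]; simp

lemma shuffleWord_cons_cons (a b : Fin d') (u v : Word d') :
    shuffleWord (a :: u) (b :: v) =
      Finsupp.mapDomain (fun w => a :: w) (shuffleWord u (b :: v)) +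
      Finsupp.mapDomain (fun w => b :: w) (shuffleWord (a :: u) v) := by
  rw [shuffleWord]

lemma mapDomain_cons_appendLetter (a : Fin d') (b : Fin d') (x : Tens d') :
    Finsupp.mapDomain (fun w => a :: w) (appendLetter b x) =
      appendLetter b (Finsupp.mapDomain (fun w => a :: w) x) := by
  rw [appendLetter, appendLetter, ← Finsupp.mapDomain_comp, ← Finsupp.mapDomain_comp]
  rfl

lemma appendLetter_single (b : Fin d') (w : Word d') (c : ℝ) :
    appendLetter b (Finsupp.single w c) = Finsupp.single (w ++ [b]) c := by
  rw [appendLetter, Finsupp.mapDomain_single]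

lemma appendLetter_add (b : Fin d') (x y : Tens d') :
    appendLetter b (x + y) = appendLetter b x + appendLetter b y :=
  Finsupp.mapDomain_add

/-- Key recursion for the shuffle product on last letters. -/
lemma shuffleWord_concat_concat (u v : Word d') (a b : Fin d') :
    shuffleWord (u ++ [a]) (v ++ [b]) =
      appendLetter a (shuffleWord u (v ++ [b])) + appendLetter b (shuffleWord (u ++ [a]) v) := by
  induction u generalizing v a b with
  | nil =>
    induction v generalizing a b with
    | nil =>
      simp only [List.nil_append, shuffleWord_cons_cons, shuffleWord_nil_left,
        shuffleWord_nil_right, Finsupp.mapDomain_single, appendLetter_single,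
        List.cons_append, List.singleton_append]
      abel
    | cons c v' ihv =>
      simp only [List.nil_append] at ihv ⊢
      simp only [List.cons_append]
      rw [shuffleWord_cons_cons a c [] (v' ++ [b]), ihv a b,
        shuffleWord_cons_cons a c [] v']
      simp only [shuffleWord_nil_left, Finsupp.mapDomain_single, Finsupp.mapDomain_add,
        appendLetter_add, appendLetter_single, mapDomain_cons_appendLetter,
        List.cons_append, List.append_assoc, List.nil_append, List.singleton_append]
      abel
  | cons c u' ihu =>
    induction v generalizing a b with
    | nil =>
      simp only [List.nil_append, List.cons_append, shuffleWord_nil_right] at *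
      rw [shuffleWord_cons_cons c b (u' ++ [a]) [], shuffleWord_cons_cons c b u' []]
      have H1 := ihu [] a b
      simp only [List.nil_append, shuffleWord_nil_right] at H1
      rw [H1]
      simp only [shuffleWord_nil_left, shuffleWord_nil_right, Finsupp.mapDomain_single,
        Finsupp.mapDomain_add, appendLetter_add, appendLetter_single,
        mapDomain_cons_appendLetter, List.cons_append, List.append_assoc,
        List.nil_append, List.singleton_append]
      abel
    | cons e v' ihv =>
      simp only [List.cons_append] at ihv ⊢
      rw [shuffleWord_cons_cons c e (u' ++ [a]) (v' ++ [b]),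
        shuffleWord_cons_cons c e u' (v' ++ [b]),
        shuffleWord_cons_cons c e (u' ++ [a]) v']
      have H1 := ihu (e :: v') a b
      simp only [List.cons_append] at H1
      have H2 := ihv a b
      rw [H1, H2]
      simp only [Finsupp.mapDomain_add, appendLetter_add, mapDomain_cons_appendLetter]
      abel

end AuxAlg
section AuxAlg2

variable {d' : ℕ}

lemma shuffle_zero_right (x : Tens d') : shuffle x 0 = 0 := by
  rw [shuffle_eq_lc]; simp [Finsupp.linearCombination_apply]

lemma Tminus_add (i : Fin d') (x y : Tens d') :
    Tminus i (x + y) = Tminus i x + Tminus i y := by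
  simp [Tminus_eq_lc]

lemma Tminus_appendLetter (i j : Fin d') (x : Tens d') :
    Tminus i (appendLetter j x) = if j = i then x else 0 := by
  rw [Tminus, appendLetter, Finsupp.sum_mapDomain_index (by simp) (by
    intro w b₁ b₂; rw [add_smul])]
  have : ∀ w : Word d', ∀ a : ℝ, a • TminusWord i (w ++ [j])
      = if j = i then Finsupp.single w a else 0 := by
    intro w a
    rw [TminusWord_concat]
    split_ifs with h
    · rw [Finsupp.smul_single, smul_eq_mul, mul_one]
    · rw [smul_zero]
  rw [Finsupp.sum_congr (g2 := fun w a => if j = i then Finsupp.single w a else 0)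
    (fun w _ => this w (x w))]
  split_ifs with h
  · exact Finsupp.sum_single x
  · exact Finset.sum_const_zero

lemma wordT_nil : (wordT ([] : Word d')) = Finsupp.single [] 1 := rfl

lemma Tminus_shuffleWord (i : Fin d') (u v : Word d') :
    Tminus i (shuffleWord u v) =
      shuffle (TminusWord i u) (wordT v) + shuffle (wordT u) (TminusWord i v) := by
  rcases List.eq_nil_or_concat u with rfl | ⟨u', a, rfl⟩
  all_goals try simp only [List.concat_eq_append] at *
  · rw [shuffleWord_nil_left, TminusWord_nil, shuffle_zero_left, zero_add]
    have h1 : Tminus i (Finsupp.single v 1) = TminusWord i v := by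
      rw [Tminus_single, one_smul]
    rw [h1]
    rcases List.eq_nil_or_concat v with rfl | ⟨v', b, rfl⟩
    all_goals try simp only [List.concat_eq_append] at *
    · rw [TminusWord_nil, shuffle_zero_right]
    · rw [TminusWord_concat]
      split_ifs with h
      · rw [wordT, shuffle_single_single, one_mul, one_smul, shuffleWord_nil_left]
      · rw [shuffle_zero_right]
  · rcases List.eq_nil_or_concat v with rfl | ⟨v', b, rfl⟩
    all_goals try simp only [List.concat_eq_append] at *
    · rw [shuffleWord_nil_right, TminusWord_nil, shuffle_zero_right, add_zero]
      have h1 : Tminus i (Finsupp.single (u' ++ [a]) 1) = TminusWord i (u' ++ [a]) := by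
        rw [Tminus_single, one_smul]
      rw [h1, TminusWord_concat]
      split_ifs with h
      · rw [wordT, shuffle_single_single, one_mul, one_smul, shuffleWord_nil_right]
      · rw [shuffle_zero_left]
    · rw [shuffleWord_concat_concat, Tminus_add, Tminus_appendLetter, Tminus_appendLetter,
        TminusWord_concat, TminusWord_concat]
      congr 1
      · split_ifs with h
        · rw [wordT, shuffle_single_single, one_mul, one_smul]
        · rw [shuffle_zero_left]
      · split_ifs with h
        · rw [wordT, shuffle_single_single, one_mul, one_smul]
        · rw [shuffle_zero_right]

lemma mapDomain_cons_apply_nil (a : Fin d') (x : Tens d') :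
    Finsupp.mapDomain (fun w => a :: w) x ([] : Word d') = 0 :=
  Finsupp.mapDomain_notin_range _ _ (by simp)

lemma appendLetter_apply_nil (j : Fin d') (x : Tens d') :
    appendLetter j x ([] : Word d') = 0 :=
  Finsupp.mapDomain_notin_range _ _ (by simp)

lemma shuffleWord_apply_nil (u v : Word d') :
    shuffleWord u v ([] : Word d') = if u = [] ∧ v = [] then 1 else 0 := by
  cases u with
  | nil =>
    rw [shuffleWord_nil_left, Finsupp.single_apply]
    cases v <;> simp
  | cons a u' =>
    cases v with
    | nil => rw [shuffleWord_nil_right, Finsupp.single_apply]; simp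
    | cons b v' =>
      rw [shuffleWord_cons_cons, Finsupp.add_apply, mapDomain_cons_apply_nil,
        mapDomain_cons_apply_nil]
      simp

lemma sigRev_zero' (X : ℝ → Fin d' → ℝ) (l : List (Fin d')) :
    sigRev X l 0 = if l = [] then 1 else 0 := by
  cases l with
  | nil => rfl
  | cons i w => simp [sigRev]

lemma sigWord_zero (X : ℝ → Fin d' → ℝ) (w : Word d') :
    sigWord X 0 w = if w = [] then 1 else 0 := by
  rw [sigWord, sigRev_zero']
  simp

lemma sigT_at_zero (X : ℝ → Fin d' → ℝ) (x : Tens d') : sigT X 0 x = x [] := by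
  rw [sigT]
  have : ∀ w ∈ x.support, ∀ a : ℝ, a * sigWord X 0 w = Finsupp.single w a [] := by
    intro w _ a
    rw [sigWord_zero, Finsupp.single_apply]
    split_ifs <;> simp
  rw [Finsupp.sum_congr (g2 := fun w a => Finsupp.single w a [])
    (fun w hw => this w hw (x w))]
  rw [← Finsupp.sum_apply, Finsupp.sum_single]

lemma sigT_expand (X : ℝ → Fin d' → ℝ) (L : ℝ) (x : Tens d') :
    sigT X L x = ∑ w ∈ x.support, x w * sigWord X L w := rfl

lemma shuffle_expand (x y : Tens d') :
    shuffle x y = ∑ u ∈ x.support, ∑ v ∈ y.support, (x u * y v) • shuffleWord u v := rfl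

lemma sigT_shuffle_of_word (X : ℝ → Fin d' → ℝ) (L : ℝ) (x y : Tens d')
    (H : ∀ u ∈ x.support, ∀ v ∈ y.support,
      sigT X L (shuffleWord u v) = sigWord X L u * sigWord X L v) :
    sigT X L (shuffle x y) = sigT X L x * sigT X L y := by
  rw [shuffle_expand, sigT_finset_sum, sigT_expand X L x, sigT_expand X L y,
    Finset.sum_mul_sum]
  refine Finset.sum_congr rfl fun u hu => ?_
  rw [sigT_finset_sum]
  refine Finset.sum_congr rfl fun v hv => ?_
  rw [sigT_smul, H u hu v hv]
  ring

end AuxAlg2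
section AuxPoly

open MvPolynomial

variable {d' m' : ℕ}

lemma contDiff_mvpoly_eval (f : MvPolynomial (Fin d') ℝ) :
    ContDiff ℝ 1 (fun y : Fin d' → ℝ => MvPolynomial.eval y f) := by
  induction f using MvPolynomial.induction_on with
  | C a => simp only [eval_C]; exact contDiff_const
  | add p q hp hq => simp only [map_add]; exact hp.add hq
  | mul_X p n hp =>
    simp only [map_mul, eval_X]
    exact hp.mul (ContinuousLinearMap.proj (R := ℝ) (φ := fun _ : Fin d' => ℝ) n).contDiff

lemma pderiv_aeval_shift (x0 : Fin d' → ℝ) (j : Fin d') (f : MvPolynomial (Fin d') ℝ) :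
    pderiv j (aeval (fun k => (X k : MvPolynomial (Fin d') ℝ) + C (x0 k)) f) =
      aeval (fun k => (X k : MvPolynomial (Fin d') ℝ) + C (x0 k)) (pderiv j f) := by
  induction f using MvPolynomial.induction_on with
  | C a => simp
  | add p q hp hq => simp only [map_add, hp, hq]
  | mul_X p n hp =>
    simp only [map_mul, aeval_X, pderiv_mul, hp, map_add, pderiv_X, pderiv_C, add_zero]
    congr 1
    rcases eq_or_ne j n with rfl | h
    · simp
    · simp [Pi.single_apply, h, (Ne.symm h)]

lemma eval_aeval_shift (x0 y : Fin d' → ℝ) (f : MvPolynomial (Fin d') ℝ) :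
    MvPolynomial.eval y
        (aeval (fun k => (X k : MvPolynomial (Fin d') ℝ) + C (x0 k)) f) =
      MvPolynomial.eval (fun k => y k + x0 k) f := by
  induction f using MvPolynomial.induction_on with
  | C a => simp
  | add p q hp hq => simp only [map_add, eval_add, hp, hq]
  | mul_X p n hp =>
    simp only [map_mul, aeval_X, map_add, aeval_C, eval_add, eval_mul, eval_X, eval_C, hp]

lemma pderiv_ptilde (p : PolyMap d' m') (x0 : Fin d' → ℝ) (i : Fin m') (j : Fin d') :
    pderiv j (ptilde p x0 i) =
      aeval (fun k => (X k : MvPolynomial (Fin d') ℝ) + C (x0 k)) (pderiv j (p i)) := by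
  rw [ptilde, map_sub, pderiv_C, sub_zero, pderiv_aeval_shift]

/-- Chain rule for evaluating a polynomial along a differentiable curve. -/
lemma hasDerivAt_mvpoly_eval {Xf : ℝ → Fin d' → ℝ} {D : Fin d' → ℝ} {r : ℝ}
    (hX : ∀ j, HasDerivAt (fun u => Xf u j) (D j) r) (f : MvPolynomial (Fin d') ℝ) :
    HasDerivAt (fun u => MvPolynomial.eval (Xf u) f)
      (∑ j, MvPolynomial.eval (Xf r) (pderiv j f) * D j) r := by
  induction f using MvPolynomial.induction_on with
  | C a =>
    simp only [eval_C, pderiv_C, map_zero, zero_mul, Finset.sum_const_zero]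
    exact hasDerivAt_const r a
  | add p q hp hq =>
    simp only [map_add, add_mul, Finset.sum_add_distrib]
    exact hp.add hq
  | mul_X p n hp =>
    simp only [map_mul, eval_X]
    have h := hp.mul (hX n)
    convert h using 1
    · rfl
    · rfl
    · rfl
    have : ∀ j : Fin d',
        MvPolynomial.eval (Xf r) (pderiv j (p * X n)) * D j =
          (MvPolynomial.eval (Xf r) (pderiv j p) * D j) * Xf r n +
            (if n = j then MvPolynomial.eval (Xf r) p * D j else 0) := by
      intro j
      rw [pderiv_mul, pderiv_X, map_add, map_mul, map_mul, eval_X]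
      have : MvPolynomial.eval (Xf r) ((Pi.single (M := fun _ => MvPolynomial (Fin d') ℝ) j 1) n)
          = if n = j then 1 else 0 := by
        rw [Pi.single_apply]
        split_ifs with h1 h2 h3 <;> simp_all
      rw [this]
      split_ifs <;> ring
    rw [Finset.sum_congr rfl fun j _ => this j, Finset.sum_add_distrib, ← Finset.sum_mul,
      Finset.sum_ite_eq (Finset.univ : Finset (Fin d')) n (fun j => MvPolynomial.eval (Xf r) p * D j)]
    simp [mul_comm]

end AuxPoly
section AuxAnalysis

open Set intervalIntegral

variable {d' : ℕ}

/-- Bundled partition data for a piecewise `C¹` path. -/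
structure PieceData (X : ℝ → Fin d' → ℝ) (L : ℝ) (n : ℕ) (t : Fin (n + 1) → ℝ) : Prop where
  mono : Monotone t
  zero : t 0 = 0
  last : t (Fin.last n) = L
  smooth : ∀ k : Fin n, ContDiffOn ℝ 1 X (Set.Icc (t k.castSucc) (t k.succ))

namespace PieceData

variable {X : ℝ → Fin d' → ℝ} {L : ℝ} {n : ℕ} {t : Fin (n + 1) → ℝ}
  (hP : PieceData X L n t)

include hP

lemma L_nonneg : 0 ≤ L := by
  rw [← hP.zero, ← hP.last]; exact hP.mono (Fin.zero_le _)

lemma t_nonneg (k : Fin (n + 1)) : 0 ≤ t k := by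
  rw [← hP.zero]; exact hP.mono (Fin.zero_le _)

lemma t_le_L (k : Fin (n + 1)) : t k ≤ L := by
  rw [← hP.last]; exact hP.mono (Fin.le_last _)

lemma piece_subset (k : Fin n) : Icc (t k.castSucc) (t k.succ) ⊆ Icc 0 L :=
  Icc_subset_Icc (hP.t_nonneg _) (hP.t_le_L _)

lemma piece_le (k : Fin n) : t k.castSucc ≤ t k.succ :=
  hP.mono (Fin.castSucc_le_succ k)

lemma smooth_comp (i : Fin d') (k : Fin n) :
    ContDiffOn ℝ 1 (fun u => X u i) (Icc (t k.castSucc) (t k.succ)) :=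
  (ContinuousLinearMap.proj (R := ℝ) (φ := fun _ : Fin d' => ℝ) i).contDiff.comp_contDiffOn
    (hP.smooth k)

/-- On the interior of each piece, each component of `X` is differentiable. -/
lemma hasDerivAt_piece (i : Fin d') (k : Fin n) {r : ℝ}
    (hr : r ∈ Ioo (t k.castSucc) (t k.succ)) :
    HasDerivAt (fun u => X u i) (deriv (fun u => X u i) r) r := by
  have hnb : Icc (t k.castSucc) (t k.succ) ∈ nhds r := Icc_mem_nhds hr.1 hr.2
  exact (((hP.smooth_comp i k).differentiableOn one_ne_zero).differentiableAt hnb).hasDerivAt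

/-- Full-path differentiability at interior points, componentwise packaged. -/
lemma hasDerivAt_all (k : Fin n) {r : ℝ} (hr : r ∈ Ioo (t k.castSucc) (t k.succ)) :
    ∀ i, HasDerivAt (fun u => X u i) (deriv (fun u => X u i) r) r :=
  fun i => hP.hasDerivAt_piece i k hr

/-- The derivative of a component is continuous on the interior of each piece. -/
lemma continuousAt_deriv (i : Fin d') (k : Fin n) {r : ℝ}
    (hr : r ∈ Ioo (t k.castSucc) (t k.succ)) :
    ContinuousAt (deriv (fun u => X u i)) r := by
  set a := t k.castSucc
  set b := t k.succ
  have hab : a < b := hr.1.trans hr.2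
  have hud : UniqueDiffOn ℝ (Icc a b) := uniqueDiffOn_Icc hab
  have hg : ContinuousOn (derivWithin (fun u => X u i) (Icc a b)) (Icc a b) :=
    (hP.smooth_comp i k).continuousOn_derivWithin hud le_rfl
  have heq : ∀ x ∈ Ioo a b,
      derivWithin (fun u => X u i) (Icc a b) x = deriv (fun u => X u i) x := by
    intro x hx
    exact derivWithin_of_mem_nhds (Icc_mem_nhds hx.1 hx.2)
  have hgat : ContinuousAt (derivWithin (fun u => X u i) (Icc a b)) r :=
    hg.continuousAt (Icc_mem_nhds hr.1 hr.2)
  refine hgat.congr ?_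
  filter_upwards [isOpen_Ioo.mem_nhds hr] with x hx
  exact heq x hx

/-- The derivative of a component is interval integrable on each piece. -/
lemma intervalIntegrable_piece (i : Fin d') (k : Fin n) :
    IntervalIntegrable (deriv (fun u => X u i)) MeasureTheory.volume
      (t k.castSucc) (t k.succ) := by
  have hab : t k.castSucc ≤ t k.succ := hP.piece_le k
  rcases eq_or_lt_of_le hab with heq | hab'
  · rw [heq]
  set a := t k.castSucc
  set b := t k.succ
  have hud : UniqueDiffOn ℝ (Icc a b) := uniqueDiffOn_Icc hab'
  have hg : ContinuousOn (derivWithin (fun u => X u i) (Icc a b)) (Icc a b) :=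
    (hP.smooth_comp i k).continuousOn_derivWithin hud le_rfl
  have hgint : IntervalIntegrable (derivWithin (fun u => X u i) (Icc a b))
      MeasureTheory.volume a b := hg.intervalIntegrable_of_Icc hab
  rw [intervalIntegrable_iff_integrableOn_Ioo_of_le hab] at hgint ⊢
  refine hgint.congr_fun ?_ measurableSet_Ioo
  intro x hx
  exact derivWithin_of_mem_nhds (Icc_mem_nhds hx.1 hx.2)

/-- The derivative of a component is interval integrable on `[0, L]`. -/
lemma intervalIntegrable_deriv (i : Fin d') :
    IntervalIntegrable (deriv (fun u => X u i)) MeasureTheory.volume 0 L := by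
  have key : ∀ k : Fin (n + 1),
      IntervalIntegrable (deriv (fun u => X u i)) MeasureTheory.volume 0 (t k) := by
    intro k
    induction k using Fin.induction with
    | zero => rw [hP.zero]
    | succ k ih => exact ih.trans (hP.intervalIntegrable_piece i k)
  rw [← hP.last]; exact key (Fin.last n)

/-- Integrands of signature type are interval integrable. -/
lemma intervalIntegrable_mul (i : Fin d') {f : ℝ → ℝ} (hf : ContinuousOn f (Icc 0 L))
    {u : ℝ} (hu : u ∈ Icc 0 L) :
    IntervalIntegrable (fun r => f r * deriv (fun s => X s i) r)
      MeasureTheory.volume 0 u := by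
  have h1 : IntervalIntegrable (deriv (fun s => X s i)) MeasureTheory.volume 0 u := by
    refine (hP.intervalIntegrable_deriv i).mono_set ?_
    rw [Set.uIcc_of_le hu.1, Set.uIcc_of_le hP.L_nonneg]
    exact Icc_subset_Icc le_rfl hu.2
  refine h1.continuousOn_mul ?_
  rw [Set.uIcc_of_le hu.1]
  exact hf.mono (Icc_subset_Icc le_rfl hu.2)

/-- Continuity of a signature-type primitive. -/
lemma continuousOn_primitive (i : Fin d') {f : ℝ → ℝ} (hf : ContinuousOn f (Icc 0 L)) :
    ContinuousOn (fun s => ∫ r in (0:ℝ)..s, f r * deriv (fun u => X u i) r) (Icc 0 L) := by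
  have h := intervalIntegral.continuousOn_primitive_interval'
    (hP.intervalIntegrable_mul i hf (right_mem_Icc.2 hP.L_nonneg))
    (left_mem_uIcc (a := (0:ℝ)) (b := L))
  rwa [Set.uIcc_of_le hP.L_nonneg] at h

/-- Derivative of a signature-type primitive at interior points of pieces. -/
lemma hasDerivAt_primitive (i : Fin d') {f : ℝ → ℝ} (hf : ContinuousOn f (Icc 0 L))
    (k : Fin n) {r : ℝ} (hr : r ∈ Ioo (t k.castSucc) (t k.succ)) :
    HasDerivAt (fun s => ∫ x in (0:ℝ)..s, f x * deriv (fun u => X u i) x)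
      (f r * deriv (fun u => X u i) r) r := by
  have hrL : r ∈ Icc 0 L := hP.piece_subset k (Ioo_subset_Icc_self hr)
  have hint : IntervalIntegrable (fun x => f x * deriv (fun u => X u i) x)
      MeasureTheory.volume 0 r := hP.intervalIntegrable_mul i hf hrL
  have hcontAt : ∀ x ∈ Ioo (t k.castSucc) (t k.succ),
      ContinuousAt (fun y => f y * deriv (fun u => X u i) y) x := by
    intro x hx
    have hxL : Icc 0 L ∈ nhds x := by
      refine Icc_mem_nhds ?_ ?_
      · exact lt_of_le_of_lt (hP.t_nonneg k.castSucc) hx.1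
      · exact lt_of_lt_of_le hx.2 (hP.t_le_L k.succ)
    exact (hf.continuousAt hxL).mul (hP.continuousAt_deriv i k hx)
  have hmeas := ContinuousAt.stronglyMeasurableAtFilter
    (E := ℝ) (μ := MeasureTheory.volume) isOpen_Ioo hcontAt r hr
  exact intervalIntegral.integral_hasDerivAt_right hint hmeas (hcontAt r hr)

/-- Continuity of `sigRev` on `[0, L]`. -/
lemma sigRev_contOn (l : List (Fin d')) : ContinuousOn (sigRev X l) (Icc 0 L) := by
  induction l with
  | nil => exact continuousOn_const
  | cons i w ih => exact hP.continuousOn_primitive i ih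

/-- Derivative of `sigRev` at the interior of pieces. -/
lemma sigRev_hasDerivAt (i : Fin d') (l : List (Fin d')) (k : Fin n) {r : ℝ}
    (hr : r ∈ Ioo (t k.castSucc) (t k.succ)) :
    HasDerivAt (sigRev X (i :: l)) (sigRev X l r * deriv (fun u => X u i) r) r :=
  hP.hasDerivAt_primitive i (hP.sigRev_contOn l) k hr

/-- Functions that agree at `0` and have equal derivatives on the interiors of all pieces
agree on `[0, L]`. -/
lemma eq_on_of_deriv_eq {f g : ℝ → ℝ} (hf : ContinuousOn f (Icc 0 L))
    (hg : ContinuousOn g (Icc 0 L)) (h0 : f 0 = g 0)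
    (hd : ∀ k : Fin n, ∀ r ∈ Ioo (t k.castSucc) (t k.succ),
      ∃ D, HasDerivAt f D r ∧ HasDerivAt g D r) :
    ∀ u ∈ Icc 0 L, f u = g u := by
  have key : ∀ k : Fin (n + 1), ∀ u ∈ Icc 0 (t k), f u = g u := by
    intro k
    induction k using Fin.induction with
    | zero =>
      intro u hu
      rw [hP.zero] at hu
      obtain rfl : u = 0 := le_antisymm hu.2 hu.1
      exact h0
    | succ k ih =>
      intro u hu
      rcases le_or_gt u (t k.castSucc) with hle | hlt
      · exact ih u ⟨hu.1, hle⟩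
      set a := t k.castSucc with ha
      set b := t k.succ with hb
      have hab : a ≤ b := hP.piece_le k
      have hsub : Icc a b ⊆ Icc 0 L := hP.piece_subset k
      set h := fun x => f x - g x with hh
      have hcont : ContinuousOn h (Icc a b) := (hf.mono hsub).sub (hg.mono hsub)
      have hdiff : DifferentiableOn ℝ h (interior (Icc a b)) := by
        rw [interior_Icc]
        intro x hx
        obtain ⟨D, hfD, hgD⟩ := hd k x hx
        exact ((hfD.sub hgD).differentiableAt).differentiableWithinAt
      have hderiv0 : ∀ x ∈ interior (Icc a b), deriv h x = 0 := by
        rw [interior_Icc]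
        intro x hx
        obtain ⟨D, hfD, hgD⟩ := hd k x hx
        have : HasDerivAt h (D - D) x := hfD.sub hgD
        rw [sub_self] at this
        exact this.deriv
      have hmono : MonotoneOn h (Icc a b) :=
        monotoneOn_of_deriv_nonneg (convex_Icc a b) hcont hdiff
          (fun x hx => (hderiv0 x hx).ge)
      have hanti : AntitoneOn h (Icc a b) :=
        antitoneOn_of_deriv_nonpos (convex_Icc a b) hcont hdiff
          (fun x hx => (hderiv0 x hx).le)
      have hua : u ∈ Icc a b := ⟨hlt.le, hu.2⟩
      have haa : a ∈ Icc a b := ⟨le_rfl, hab⟩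
      have h1 : h a ≤ h u := hmono haa hua hlt.le
      have h2 : h u ≤ h a := hanti haa hua hlt.le
      have hha : h a = 0 := by
        have := ih a ⟨hP.t_nonneg _, le_rfl⟩
        simp [hh, this]
      have : h u = 0 := le_antisymm (h2.trans hha.le) (hha.ge.trans h1)
      exact sub_eq_zero.1 this
  intro u hu
  exact key (Fin.last n) u ⟨hu.1, by rw [hP.last]; exact hu.2⟩

/-- Fundamental theorem of calculus for each component of the path. -/
lemma ftc_letter (i : Fin d') :
    ∀ u ∈ Icc 0 L, (∫ r in (0:ℝ)..u, deriv (fun s => X s i) r) = X u i - X 0 i := by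
  have key : ∀ k : Fin (n + 1), ∀ u ∈ Icc 0 (t k),
      (∫ r in (0:ℝ)..u, deriv (fun s => X s i) r) = X u i - X 0 i := by
    intro k
    induction k using Fin.induction with
    | zero =>
      intro u hu
      rw [hP.zero] at hu
      obtain rfl : u = 0 := le_antisymm hu.2 hu.1
      simp
    | succ k ih =>
      intro u hu
      rcases le_or_gt u (t k.castSucc) with hle | hlt
      · exact ih u ⟨hu.1, hle⟩
      set a := t k.castSucc with ha
      set b := t k.succ with hb
      have hau : a ≤ u := hlt.le
      have hub : u ≤ b := hu.2
      have hIa : IntervalIntegrable (deriv (fun s => X s i)) MeasureTheory.volume 0 a := by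
        refine (hP.intervalIntegrable_deriv i).mono_set ?_
        rw [Set.uIcc_of_le (hP.t_nonneg k.castSucc), Set.uIcc_of_le hP.L_nonneg]
        exact Icc_subset_Icc le_rfl (hP.t_le_L _)
      have hIau : IntervalIntegrable (deriv (fun s => X s i)) MeasureTheory.volume a u := by
        refine (hP.intervalIntegrable_piece i k).mono_set ?_
        rw [Set.uIcc_of_le hau, Set.uIcc_of_le (hP.piece_le k)]
        exact Icc_subset_Icc le_rfl hub
      rw [← intervalIntegral.integral_add_adjacent_intervals hIa hIau,
        ih a ⟨hP.t_nonneg _, le_rfl⟩]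
      have hseg : (∫ r in a..u, deriv (fun s => X s i) r) = X u i - X a i := by
        refine intervalIntegral.integral_eq_sub_of_hasDeriv_right_of_le
          (f := fun y => X y i) hau ?_ ?_ hIau
        · exact (hP.smooth_comp i k).continuousOn.mono (Icc_subset_Icc le_rfl hub)
        · intro x hx
          have hx' : x ∈ Ioo a b := ⟨hx.1, lt_of_lt_of_le hx.2 hub⟩
          exact (hP.hasDerivAt_piece i k hx').hasDerivWithinAt
      rw [hseg]
      ring
  intro u hu
  exact key (Fin.last n) u ⟨hu.1, by rw [hP.last]; exact hu.2⟩

end PieceData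

end AuxAnalysis
section AuxAnalysis2

open Set intervalIntegral

variable {d' : ℕ}

lemma sigWord_nil (X : ℝ → Fin d' → ℝ) (s : ℝ) : sigWord X s ([] : Word d') = 1 := rfl

namespace PieceData

variable {X : ℝ → Fin d' → ℝ} {L : ℝ} {n : ℕ} {t : Fin (n + 1) → ℝ}
  (hP : PieceData X L n t)

include hP

lemma sigWord_contOn (w : Word d') :
    ContinuousOn (fun s => sigWord X s w) (Icc 0 L) :=
  hP.sigRev_contOn w.reverse

lemma sigT_contOn (x : Tens d') :
    ContinuousOn (fun s => sigT X s x) (Icc 0 L) := by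
  have h : (fun s => sigT X s x) = fun s => ∑ w ∈ x.support, x w * sigWord X s w := rfl
  rw [h]
  apply continuousOn_finset_sum
  intro w _
  exact continuousOn_const.mul (hP.sigWord_contOn w)

lemma sigWord_hasDerivAt (w : Word d') (k : Fin n) {r : ℝ}
    (hr : r ∈ Ioo (t k.castSucc) (t k.succ)) :
    HasDerivAt (fun s => sigWord X s w)
      (∑ i, sigT X r (Tminus i (wordT w)) * deriv (fun u => X u i) r) r := by
  rcases List.eq_nil_or_concat w with rfl | ⟨u, a, rfl⟩
  · have h1 : (fun s => sigWord X s ([] : Word d')) = fun _ => (1 : ℝ) := rfl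
    have h2 : (∑ i, sigT X r (Tminus i (wordT ([] : Word d')))
        * deriv (fun u => X u i) r) = 0 := by
      have : ∀ i : Fin d', Tminus i (wordT ([] : Word d')) = 0 := by
        intro i; rw [wordT, Tminus_single, TminusWord_nil, smul_zero]
      simp [this, sigT_zero]
    rw [h1, h2]
    exact hasDerivAt_const r 1
  · simp only [List.concat_eq_append] at *
    have h1 : (fun s => sigWord X s (u ++ [a])) = sigRev X (a :: u.reverse) := by
      funext s
      rw [sigWord, List.reverse_append, List.reverse_singleton, List.singleton_append]
    have hd := hP.sigRev_hasDerivAt a u.reverse k hr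
    have h2 : (∑ i, sigT X r (Tminus i (wordT (u ++ [a]))) * deriv (fun s => X s i) r)
        = sigRev X u.reverse r * deriv (fun s => X s a) r := by
      have hterm : ∀ i : Fin d',
          sigT X r (Tminus i (wordT (u ++ [a]))) * deriv (fun s => X s i) r
            = if a = i then sigRev X u.reverse r * deriv (fun s => X s i) r else 0 := by
        intro i
        rw [wordT, Tminus_single, one_smul, TminusWord_concat]
        split_ifs with h
        · rw [sigT_single, one_mul]; rfl
        · rw [sigT_zero, zero_mul]
      rw [Finset.sum_congr rfl fun i _ => hterm i]
      rw [Finset.sum_ite_eq (Finset.univ : Finset (Fin d')) a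
        (fun i => sigRev X u.reverse r * deriv (fun s => X s i) r)]
      simp
    rw [h1, h2]
    exact hd

lemma sigT_hasDerivAt (x : Tens d') (k : Fin n) {r : ℝ}
    (hr : r ∈ Ioo (t k.castSucc) (t k.succ)) :
    HasDerivAt (fun s => sigT X s x)
      (∑ i, sigT X r (Tminus i x) * deriv (fun u => X u i) r) r := by
  have h : (fun s => sigT X s x) = fun s => ∑ w ∈ x.support, x w * sigWord X s w := rfl
  rw [h]
  have hsum := HasDerivAt.sum
    (fun w (_ : w ∈ x.support) => (hP.sigWord_hasDerivAt w k hr).const_mul (x w))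
  convert hsum using 1
  · rfl
  · rfl
  · ext y; simp [Finset.sum_apply]
  have hx : ∀ i : Fin d', sigT X r (Tminus i x)
      = ∑ w ∈ x.support, x w * sigT X r (TminusWord i w) := by
    intro i
    have : Tminus i x = ∑ w ∈ x.support, x w • TminusWord i w := rfl
    rw [this, sigT_finset_sum]
    exact Finset.sum_congr rfl fun w _ => sigT_smul X r (x w) _
  have hw : ∀ w : Word d', ∀ i : Fin d',
      sigT X r (Tminus i (wordT w)) = sigT X r (TminusWord i w) := by
    intro w i; rw [wordT, Tminus_single, one_smul]
  rw [Finset.sum_congr rfl fun i (_ : i ∈ Finset.univ) => by rw [hx i, Finset.sum_mul]]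
  rw [Finset.sum_comm]
  refine Finset.sum_congr rfl fun w _ => ?_
  rw [Finset.mul_sum]
  refine Finset.sum_congr rfl fun i _ => ?_
  rw [hw w i]
  ring

/-- The shuffle identity for words. -/
lemma sigT_shuffleWord : ∀ (N : ℕ) (u v : Word d'), u.length + v.length ≤ N →
    ∀ {s : ℝ}, s ∈ Icc 0 L →
      sigT X s (shuffleWord u v) = sigWord X s u * sigWord X s v := by
  intro N
  induction N with
  | zero =>
    intro u v hlen s _
    obtain ⟨hu, hv⟩ : u = [] ∧ v = [] := by
      constructor <;> [skip; skip] <;>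
        · rw [← List.length_eq_zero_iff]; omega
    subst hu; subst hv
    simp [shuffleWord_nil_left, sigT_single, sigWord_nil]
  | succ N ih =>
    intro u v hlen s hs
    refine hP.eq_on_of_deriv_eq (f := fun s => sigT X s (shuffleWord u v))
      (g := fun s => sigWord X s u * sigWord X s v) (hP.sigT_contOn _)
      ((hP.sigWord_contOn u).mul (hP.sigWord_contOn v)) ?_ ?_ s hs
    · show sigT X 0 (shuffleWord u v) = sigWord X 0 u * sigWord X 0 v
      rw [sigT_at_zero, shuffleWord_apply_nil, sigWord_zero, sigWord_zero]
      by_cases hu : u = [] <;> by_cases hv : v = [] <;> simp [hu, hv]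
    · intro k r hr
      have hrL : r ∈ Icc 0 L := hP.piece_subset k (Ioo_subset_Icc_self hr)
      refine ⟨∑ i, sigT X r (Tminus i (shuffleWord u v)) * deriv (fun s => X s i) r,
        hP.sigT_hasDerivAt _ k hr, ?_⟩
      have hu' := hP.sigT_hasDerivAt (wordT u) k hr
      have hv' := hP.sigT_hasDerivAt (wordT v) k hr
      have hgw : ∀ w : Word d', (fun s => sigT X s (wordT w)) = fun s => sigWord X s w := by
        intro w; funext s; rw [sigT_wordT]
      rw [hgw u] at hu'
      rw [hgw v] at hv'
      have hmul := hu'.mul hv'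
      convert hmul using 1
      · rfl
      · rfl
      · rfl
      -- value identity
      have hL : ∀ i : Fin d', sigT X r (Tminus i (shuffleWord u v))
          = sigT X r (Tminus i (wordT u)) * sigWord X r v
            + sigWord X r u * sigT X r (Tminus i (wordT v)) := by
        intro i
        rw [Tminus_shuffleWord, sigT_add]
        congr 1
        · rcases List.eq_nil_or_concat u with rfl | ⟨u', a, rfl⟩
          all_goals try simp only [List.concat_eq_append] at *
          · rw [TminusWord_nil, shuffle_zero_left, sigT_zero, wordT, Tminus_single,
              TminusWord_nil, smul_zero, sigT_zero, zero_mul]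
          · simp only [wordT, Tminus_single, one_smul, TminusWord_concat]
            split_ifs with h
            · have hlen' : u'.length + v.length ≤ N := by
                simp only [List.length_append, List.length_singleton] at hlen; omega
              have h2 : shuffle (Finsupp.single u' 1) (Finsupp.single v 1)
                  = shuffleWord u' v := by
                rw [shuffle_single_single, one_mul, one_smul]
              have h3 := ih u' v hlen' hrL
              rw [h2, h3, sigT_single, one_mul]
            · simp [shuffle_zero_left, shuffle_zero_right, sigT_zero]
        · rcases List.eq_nil_or_concat v with rfl | ⟨v', b, rfl⟩
          all_goals try simp only [List.concat_eq_append] at *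
          · rw [TminusWord_nil, shuffle_zero_right, sigT_zero, wordT, Tminus_single,
              TminusWord_nil, smul_zero, sigT_zero, mul_zero]
          · simp only [wordT, Tminus_single, one_smul, TminusWord_concat]
            split_ifs with h
            · have hlen' : u.length + v'.length ≤ N := by
                simp only [List.length_append, List.length_singleton] at hlen; omega
              have h2 : shuffle (Finsupp.single u 1) (Finsupp.single v' 1)
                  = shuffleWord u v' := by
                rw [shuffle_single_single, one_mul, one_smul]
              have h3 := ih u v' hlen' hrL
              rw [h2, h3, sigT_single, one_mul]
            · simp [shuffle_zero_left, shuffle_zero_right, sigT_zero]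
      rw [Finset.sum_congr rfl fun i _ => by rw [hL i]]
      rw [Finset.sum_congr rfl (g := fun i =>
        sigT X r (Tminus i (wordT u)) * deriv (fun s => X s i) r * sigWord X r v
          + sigWord X r u * (sigT X r (Tminus i (wordT v)) * deriv (fun s => X s i) r))
        (fun i _ => by ring)]
      rw [Finset.sum_add_distrib, ← Finset.sum_mul, ← Finset.mul_sum]

/-- The shuffle identity. -/
lemma sigT_shuffle (x y : Tens d') {s : ℝ} (hs : s ∈ Icc 0 L) :
    sigT X s (shuffle x y) = sigT X s x * sigT X s y := by
  refine sigT_shuffle_of_word X s x y fun u _ v _ => ?_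
  exact hP.sigT_shuffleWord (u.length + v.length) u v le_rfl hs

end PieceData

end AuxAnalysis2
section AuxAnalysis3

open Set MvPolynomial

variable {d' m' : ℕ}

namespace PieceData

variable {X : ℝ → Fin d' → ℝ} {L : ℝ} {n : ℕ} {t : Fin (n + 1) → ℝ}
  (hP : PieceData X L n t)

include hP

lemma sigT_letter {s : ℝ} (hs : s ∈ Icc 0 L) (i : Fin d') :
    sigT X s (letterT i) = X s i - X 0 i := by
  rw [letterT, sigT_single, one_mul]
  have h1 : sigWord X s [i] = ∫ r in (0:ℝ)..s, sigRev X [] r * deriv (fun u => X u i) r := rfl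
  have h2 : (fun r => sigRev X [] r * deriv (fun u => X u i) r)
      = fun r => deriv (fun u => X u i) r := by
    funext r
    show (1 : ℝ) * _ = _
    rw [one_mul]
  rw [h1, h2]
  exact hP.ftc_letter i s hs

lemma sigT_shufflePow (x : Tens d') (N : ℕ) {s : ℝ} (hs : s ∈ Icc 0 L) :
    sigT X s (shufflePow x N) = (sigT X s x) ^ N := by
  induction N with
  | zero =>
    rw [shufflePow, sigT_single, sigWord_nil, one_mul, pow_zero]
  | succ N ih =>
    rw [shufflePow, hP.sigT_shuffle _ _ hs, ih, pow_succ]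

lemma sigT_shuffleList (l : List (Tens d')) {s : ℝ} (hs : s ∈ Icc 0 L) :
    sigT X s (shuffleList l) = (l.map (sigT X s)).prod := by
  induction l with
  | nil => rw [shuffleList, sigT_single, sigWord_nil, one_mul, List.map_nil, List.prod_nil]
  | cons x xs ih =>
    rw [shuffleList, hP.sigT_shuffle _ _ hs, ih, List.map_cons, List.prod_cons]

lemma sigT_phiMon (τ : Fin d' →₀ ℕ) {s : ℝ} (hs : s ∈ Icc 0 L) :
    sigT X s (phiMon τ) = ∏ i, (X s i - X 0 i) ^ τ i := by
  rw [phiMon, hP.sigT_shuffleList _ hs, List.map_map, ← List.ofFn_eq_map, List.prod_ofFn]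
  refine Finset.prod_congr rfl fun i _ => ?_
  show sigT X s (shufflePow (letterT i) (τ i)) = _
  rw [hP.sigT_shufflePow _ _ hs, hP.sigT_letter hs i]

lemma sigT_phi (q : MvPolynomial (Fin d') ℝ) {s : ℝ} (hs : s ∈ Icc 0 L) :
    sigT X s (phi q) = MvPolynomial.eval (fun j => X s j - X 0 j) q := by
  rw [phi, sigT_finset_sum, MvPolynomial.eval_eq']
  refine Finset.sum_congr rfl fun τ _ => ?_
  rw [sigT_smul, hP.sigT_phiMon τ hs]

lemma sigT_kP (p : PolyMap d' m') (i : Fin m') (j : Fin d') {s : ℝ} (hs : s ∈ Icc 0 L) :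
    sigT X s (kP (ptilde p (X 0)) i j) = MvPolynomial.eval (X s) (pderiv j (p i)) := by
  rw [kP, pderiv_ptilde, hP.sigT_phi _ hs, eval_aeval_shift]
  have h1 : (fun k => X s k - X 0 k + X 0 k) = X s := by funext k; ring
  rw [h1]

/-- The transformed path is piecewise `C¹` with the same partition. -/
lemma pPath_pieceData (p : PolyMap d' m') : PieceData (pPath p X) L n t := by
  refine ⟨hP.mono, hP.zero, hP.last, fun k => ?_⟩
  rw [contDiffOn_pi]
  intro i
  exact (contDiff_mvpoly_eval (p i)).comp_contDiffOn (hP.smooth k)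

/-- Main induction: signature of the transformed path against reversed words. -/
lemma main_rev (p : PolyMap d' m') (l : List (Fin m')) :
    ∀ u ∈ Icc 0 L, sigRev (pPath p X) l u = sigT X u (MpRev (ptilde p (X 0)) l) := by
  have hQ : PieceData (pPath p X) L n t := hP.pPath_pieceData p
  induction l with
  | nil =>
    intro u _
    rw [show sigRev (pPath p X) [] u = 1 from rfl,
      show MpRev (ptilde p (X 0)) [] = Finsupp.single [] 1 from rfl,
      sigT_single, sigWord_nil, mul_one]
  | cons i l ihl =>
    refine hP.eq_on_of_deriv_eq (f := sigRev (pPath p X) (i :: l))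
      (g := fun u => sigT X u (MpRev (ptilde p (X 0)) (i :: l)))
      (hQ.sigRev_contOn (i :: l)) (hP.sigT_contOn _) ?_ ?_
    · show sigRev (pPath p X) (i :: l) 0 = sigT X 0 (MpRev (ptilde p (X 0)) (i :: l))
      rw [sigRev_zero', if_neg (by simp), sigT_at_zero]
      rw [show MpRev (ptilde p (X 0)) (i :: l)
          = ∑ j, appendLetter j (shuffle (MpRev (ptilde p (X 0)) l)
              (kP (ptilde p (X 0)) i j)) from rfl]
      rw [Finset.sum_apply']
      simp [appendLetter_apply_nil]
    · intro k r hr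
      have hrL : r ∈ Icc 0 L := hP.piece_subset k (Ioo_subset_Icc_self hr)
      refine ⟨sigRev (pPath p X) l r * deriv (fun u => pPath p X u i) r,
        hQ.sigRev_hasDerivAt i l k hr, ?_⟩
      have hg := hP.sigT_hasDerivAt (MpRev (ptilde p (X 0)) (i :: l)) k hr
      convert hg using 1
      -- identify the derivative values
      have hTm : ∀ jl : Fin d', Tminus jl (MpRev (ptilde p (X 0)) (i :: l))
          = shuffle (MpRev (ptilde p (X 0)) l) (kP (ptilde p (X 0)) i jl) := by
        intro jl
        rw [show MpRev (ptilde p (X 0)) (i :: l)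
            = ∑ j, appendLetter j (shuffle (MpRev (ptilde p (X 0)) l)
                (kP (ptilde p (X 0)) i j)) from rfl]
        rw [Tminus_finset_sum]
        rw [Finset.sum_congr rfl fun j _ => Tminus_appendLetter jl j _]
        rw [Finset.sum_ite_eq' Finset.univ jl
          (fun j => shuffle (MpRev (ptilde p (X 0)) l) (kP (ptilde p (X 0)) i j))]
        simp
      have hderiv : deriv (fun u => pPath p X u i) r
          = ∑ j, MvPolynomial.eval (X r) (pderiv j (p i)) * deriv (fun u => X u j) r :=
        (hasDerivAt_mvpoly_eval (hP.hasDerivAt_all k hr) (p i)).deriv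
      rw [ihl r hrL, hderiv, Finset.mul_sum]
      refine Finset.sum_congr rfl fun j _ => ?_
      rw [hTm j, hP.sigT_shuffle _ _ hrL, hP.sigT_kP p i j hrL]
      ring

end PieceData

end AuxAnalysis3

/-- For any piecewise continuously differentiable path `X : [0,L] → ℝ^d`
and any polynomial map `p`, with `p̃(y) = p(y + X(0)) − p(X(0))`, one has
`⟨σ(p(X)), w⟩ = ⟨σ(X), M_{p̃}(w)⟩` for all `w ∈ T(ℝ^m)`. -/
theorem signature_polynomial_transform_general (d m : ℕ) (L : ℝ)
    (X : ℝ → Fin d → ℝ) (hX : PiecewiseC1 X L) (p : PolyMap d m) :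
    ∀ x : Tens m, sigT (pPath p X) L x = sigT X L (Mp (ptilde p (X 0)) x) := by
  obtain ⟨n, t, hmono, h0, hlast, hsm⟩ := hX
  have hP : PieceData X L n t := ⟨hmono, h0, hlast, hsm⟩
  intro x
  have hword : ∀ w : Word m, sigWord (pPath p X) L w = sigT X L (MpWord (ptilde p (X 0)) w) := by
    intro w
    rw [sigWord, MpWord]
    exact hP.main_rev p w.reverse L ⟨hP.L_nonneg, le_rfl⟩
  rw [sigT_expand (pPath p X) L x]
  have hMp : Mp (ptilde p (X 0)) x = ∑ w ∈ x.support, x w • MpWord (ptilde p (X 0)) w := rfl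
  rw [hMp, sigT_finset_sum]
  refine Finset.sum_congr rfl fun w _ => ?_
  rw [sigT_smul, hword w]

end SigPaper
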